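/- For integers t ≥ 2, if α ∈ [1/2,1] maximises f_{1,t}(α) = α(1−α)^t + α^t(1−α) over [1/2,1], then 1−α > 1/(t+1). -/

import Mathlib

lemma bern (x y : ℝ) (m : ℕ) (hx : 0 < x) (hy : -x ≤ y) :
    x^(m+1) + (m+1 : ℝ) * x^m * y ≤ (x+y)^(m+1) := by
  have h1 : (-2:ℝ) ≤ y / x := by
    rw [le_div_iff₀ hx]; nlinarith
  have h2 := one_add_mul_le_pow h1 (m+1)
  have h3 : (1 + y/x) = (x + y)/x := by field_simp
  rw [h3, div_pow, le_div_iff₀ (pow_pos hx (m+1))] at h2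
  calc x^(m+1) + (m+1 : ℝ) * x^m * y
      = (1 + (↑(m+1):ℝ) * (y/x)) * x^(m+1) := by
        field_simp; push_cast; ring
    _ ≤ (x+y)^(m+1) := h2


lemma bern2 (x y : ℝ) (m : ℕ) (hx : 0 < x) (hy : -x ≤ y) :
    x^(m+2) + ((m:ℝ)+2) * x^(m+1) * y ≤ (x+y)^(m+2) := by
  have h := bern x y (m+1) hx hy
  have e : ((↑(m+1):ℝ)+1) = (m:ℝ)+2 := by push_cast; ring
  rw [e] at h
  exact h

set_option maxHeartbeats 1000000 in
/-- For integers `t ≥ 2`, if `α ∈ [1/2,1]` maximises `f_{1,t}` over `[1/2,1]`,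
then `1−α > 1/(t+1)`. -/
theorem stmt_3 (t : ℕ) (ht : 2 ≤ t) (α : ℝ) (hα : α ∈ Set.Icc (1/2 : ℝ) 1)
    (hmax : ∀ β ∈ Set.Icc (1/2 : ℝ) 1,
      β * (1-β)^t + β^t * (1-β) ≤ α * (1-α)^t + α^t * (1-α)) :
    1 - α > 1 / ((t:ℝ)+1) := by
  by_contra hcon
  push_neg at hcon
  obtain ⟨m, rfl⟩ : ∃ m, t = m + 2 := ⟨t - 2, by omega⟩
  obtain ⟨hαh, hα1⟩ := hα
  set n : ℝ := (m:ℝ) + 3 with hn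
  have hn3 : (3:ℝ) ≤ n := by
    have : (0:ℝ) ≤ (m:ℝ) := Nat.cast_nonneg m
    linarith
  set u₀ : ℝ := 1/n with hu₀def
  have hu₀pos : 0 < u₀ := by positivity
  have hu₀3 : u₀ ≤ 1/3 := by
    rw [hu₀def, div_le_div_iff₀ (by linarith) (by norm_num)]; linarith
  have hnu : n * u₀ = 1 := by
    rw [hu₀def]; field_simp
  set P : ℝ := u₀^(m+1) with hP
  have hPpos : 0 < P := pow_pos hu₀pos _
  have hP3 : P ≤ 1/3 := by
    calc P = u₀^m * u₀ := by rw [hP]; ring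
      _ ≤ 1 * (1/3) := by
          apply mul_le_mul _ hu₀3 hu₀pos.le (by norm_num)
          exact pow_le_one₀ hu₀pos.le (by linarith)
      _ = 1/3 := by norm_num
  set δ : ℝ := P / (4 * ((m:ℝ) + 2)) with hδ
  have hm2pos : (0:ℝ) < (m:ℝ) + 2 := by positivity
  have hδpos : 0 < δ := by positivity
  have htδ : ((m:ℝ) + 2) * δ = P / 4 := by
    rw [hδ]; field_simp
  have hδsmall : δ ≤ 1/24 := by
    rw [hδ, div_le_iff₀ (by positivity)]
    nlinarith
  -- the competitor β
  set β : ℝ := 1 - (u₀ + δ) with hβ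
  have hβmem : β ∈ Set.Icc (1/2 : ℝ) 1 := by
    constructor
    · rw [hβ]; linarith
    · rw [hβ]; linarith
  have hmb := hmax β hβmem
  -- facts about α
  have hcon' : 1 - α ≤ u₀ := by
    have : ((m+2:ℕ):ℝ) + 1 = n := by push_cast [hn]; ring
    rw [this] at hcon; exact hcon
  have ha0 : 0 ≤ 1 - α := by linarith
  have hαpos : 0 < α := by linarith
  -- F1 : α*(1-α)^(m+2) ≤ (1-u₀)*u₀^(m+2)
  have F1 : α * (1-α)^(m+2) ≤ (1-u₀) * u₀^(m+2) := by
    have h1 : α * (1-α) ≤ (1-u₀) * u₀ := by nlinarith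
    have h2 : (1-α)^(m+1) ≤ u₀^(m+1) := pow_le_pow_left₀ ha0 hcon' _
    calc α * (1-α)^(m+2) = (α * (1-α)) * (1-α)^(m+1) := by ring
      _ ≤ ((1-u₀) * u₀) * u₀^(m+1) := by
          apply mul_le_mul h1 h2 (by positivity) (by nlinarith)
      _ = (1-u₀) * u₀^(m+2) := by ring
  -- F2 : α^(m+2)*(1-α) ≤ u₀*(1-u₀)^(m+2)
  have F2 : α^(m+2) * (1-α) ≤ u₀ * (1-u₀)^(m+2) := by
    have hd : 0 ≤ u₀ - (1-α) := by linarith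
    have hb := bern2 α (-(u₀ - (1-α))) m hαpos (by linarith)
    have he : α + -(u₀ - (1-α)) = 1 - u₀ := by ring
    rw [he] at hb
    -- hb : α^(m+2) + ((m:ℝ)+2) * α^(m+1) * (-(u₀-(1-α))) ≤ (1-u₀)^(m+2)
    have hαm : (0:ℝ) ≤ α^(m+1) := by positivity
    have hsplit : α^(m+2) = α^(m+1) * α := by ring
    -- step1 : α^(m+2)*(1-α) ≤ u₀*α^(m+2) - ((m:ℝ)+2)*u₀*(u₀-(1-α))*α^(m+1)
    have hmu : ((m:ℝ)+2) * u₀ = 1 - u₀ := by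
      have h := hnu
      rw [hn] at h
      linarith [h]
    have step1 : α^(m+2) * (1-α) ≤ u₀ * α^(m+2) - ((m:ℝ)+2) * u₀ * ((u₀-(1-α)) * α^(m+1)) := by
      have : ((m:ℝ)+2) * u₀ * ((u₀-(1-α)) * α^(m+1)) ≤ (u₀ - (1-α)) * α^(m+2) := by
        rw [hsplit]
        rw [hmu]
        linarith [mul_nonneg (mul_nonneg hd hαm) (show (0:ℝ) ≤ α - (1-u₀) by linarith)]
      linarith [this]
    have step2 : u₀ * α^(m+2) - ((m:ℝ)+2) * u₀ * ((u₀-(1-α)) * α^(m+1)) ≤ u₀ * (1-u₀)^(m+2) := by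
      linarith [mul_le_mul_of_nonneg_left hb hu₀pos.le]
    linarith
  -- F3 : lower bound on β*(1-β)^(m+2)
  have h1β : 1 - β = u₀ + δ := by rw [hβ]; ring
  have hβpos : 0 < β := by rw [hβ]; linarith
  have F3 : (1-u₀) * u₀^(m+2) + (3/4) * δ * P ≤ β * (1-β)^(m+2) := by
    have hb := bern2 u₀ δ m hu₀pos (by linarith)
    have key : (1-u₀) * u₀^(m+2) + (3/4) * δ * P ≤ β * (u₀^(m+2) + ((m:ℝ)+2) * u₀^(m+1) * δ) := by
      have hexp : u₀^(m+2) = P * u₀ := by rw [hP]; ring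
      rw [hβ, ← hP, hexp]
      have hnu' : ((m:ℝ)+3) * u₀ = 1 := by rw [hn] at hnu; exact hnu
      have h1 : δ * P * (((m:ℝ)+3) * u₀) = δ * P := by rw [hnu']; ring
      have h2 : δ * P * (((m:ℝ)+2) * δ) = δ * P * (P/4) := by rw [htδ]
      have h3 : δ * (P * P) ≤ δ * (P * (1/3)) := by
        apply mul_le_mul_of_nonneg_left _ hδpos.le
        exact mul_le_mul_of_nonneg_left hP3 hPpos.le
      have h4 : 0 ≤ δ * P * (m:ℝ) :=
        mul_nonneg (mul_nonneg hδpos.le hPpos.le) (Nat.cast_nonneg m)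
      linarith [h1, h2, h3, h4, mul_pos hδpos hPpos]
    calc (1-u₀) * u₀^(m+2) + (3/4) * δ * P
        ≤ β * (u₀^(m+2) + ((m:ℝ)+2) * u₀^(m+1) * δ) := key
      _ ≤ β * (u₀+δ)^(m+2) := mul_le_mul_of_nonneg_left hb hβpos.le
      _ = β * (1-β)^(m+2) := by rw [h1β]
  -- F4 : lower bound on β^(m+2)*(1-β)
  have F4 : u₀ * (1-u₀)^(m+2) - (1/4) * δ * P ≤ β^(m+2) * (1-β) := by
    have hb := bern2 (1-u₀) (-δ) m (by linarith) (by linarith)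
    have he : (1-u₀) + -δ = β := by rw [hβ]; ring
    rw [he] at hb
    set Q : ℝ := (1-u₀)^(m+1) with hQ
    have hQpos : 0 < Q := by
      rw [hQ]; exact pow_pos (by linarith) (m+1)
    have hQ1 : Q ≤ 1 := by
      rw [hQ]; exact pow_le_one₀ (by linarith) (by linarith)
    have hexp : (1-u₀)^(m+2) = Q * (1-u₀) := by rw [hQ]; ring
    have key : u₀ * (1-u₀)^(m+2) - (1/4) * δ * P
        ≤ ((1-u₀)^(m+2) + ((m:ℝ)+2) * (1-u₀)^(m+1) * (-δ)) * (1-β) := by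
      rw [h1β, hexp, ← hQ]
      have hnu' : ((m:ℝ)+3) * u₀ = 1 := by rw [hn] at hnu; exact hnu
      have h1 : δ * Q * (((m:ℝ)+3) * u₀) = δ * Q := by rw [hnu']; ring
      have h2 : δ * Q * (((m:ℝ)+2) * δ) = δ * Q * (P/4) := by rw [htδ]
      have h3 : δ * (P * Q) ≤ δ * (P * 1) := by
        apply mul_le_mul_of_nonneg_left _ hδpos.le
        exact mul_le_mul_of_nonneg_left hQ1 hPpos.le
      linarith [h1, h2, h3, mul_pos hδpos hQpos, mul_pos hδpos hPpos]
    calc u₀ * (1-u₀)^(m+2) - (1/4) * δ * P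
        ≤ ((1-u₀)^(m+2) + ((m:ℝ)+2) * (1-u₀)^(m+1) * (-δ)) * (1-β) := key
      _ ≤ β^(m+2) * (1-β) :=
          mul_le_mul_of_nonneg_right hb (by rw [h1β]; linarith)
  have hfinal : 0 < δ * P := mul_pos hδpos hPpos
  clear_value n u₀ P δ β
  linarith [hmb, F1, F2, F3, F4, hfinal]
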